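/- Let B be a random N×(N+1) sign matrix with B_{ij} = 1 for i < j, B_{ij} = -1 for i = j, and B_{ij} uniform in {1,-1} independently for i > j. For fixed k-length sequences I = (i_1,...,i_k), J = (j_1,...,j_k) of distinct indices, the probability that the submatrix (B_{i_r, j_s})_{r,s} satisfies B_{i_r, j_r} = -1 for all r and B_{i_r, j_s} = 1 for all r ≠ s (a valid star pattern w.r.t. base value 1) is at most 2^{-k(k-1)/2}. -/
import Mathlib


/-- The random sign matrix: `+1` above the diagonal, `-1` on the diagonal, and
a random sign (encoded by `g`) strictly below the diagonal. -/
def Bmat (N : ℕ) (g : Fin N × Fin (N + 1) → Bool) (i : Fin N) (j : Fin (N + 1)) : ℤ :=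
  if (i : ℕ) < (j : ℕ) then 1
  else if (i : ℕ) = (j : ℕ) then -1
  else if g (i, j) then 1 else -1

/-- For fixed sequences of distinct row indices `I` and column indices `J`, the
probability (under uniformly random below-diagonal signs) that the submatrix
`(B_{I r, J s})` is a valid star pattern w.r.t. base value `1` (i.e. `-1` on its
diagonal and `+1` off the diagonal) is at most `2 ^ (-k(k-1)/2)`. -/
theorem stmt_15 (N k : ℕ) (I : Fin k → Fin N) (J : Fin k → Fin (N + 1))
    (hI : Function.Injective I) (hJ : Function.Injective J) :
    Nat.card {g : Fin N × Fin (N + 1) → Bool //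
        (∀ r : Fin k, Bmat N g (I r) (J r) = -1) ∧
        ∀ r s : Fin k, r ≠ s → Bmat N g (I r) (J s) = 1} * 2 ^ (k * (k - 1) / 2)
      ≤ Nat.card (Fin N × Fin (N + 1) → Bool) := by
  set P : (Fin N × Fin (N + 1) → Bool) → Prop := fun g =>
    (∀ r : Fin k, Bmat N g (I r) (J r) = -1) ∧
      ∀ r s : Fin k, r ≠ s → Bmat N g (I r) (J s) = 1 with hP
  by_cases hne : ∃ g, P g
  swap
  · have : IsEmpty {g // P g} := ⟨fun ⟨g, hg⟩ => hne ⟨g, hg⟩⟩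
    rw [Nat.card_of_isEmpty]
    simp
  obtain ⟨g₀, hg₀d, hg₀o⟩ := hne
  -- basic consequences of the existence of a valid pattern
  have hJI : ∀ r : Fin k, (J r : ℕ) ≤ (I r : ℕ) := by
    intro r
    by_contra h
    push_neg at h
    have := hg₀d r
    simp [Bmat, h] at this
  have hIJ : ∀ r s : Fin k, r ≠ s → (I r : ℕ) ≠ (J s : ℕ) := by
    intro r s hrs h
    have := hg₀o r s hrs
    simp [Bmat, h] at this
  classical
  set T : Finset (Fin k × Fin k) :=
    Finset.univ.filter (fun p => p.1 ≠ p.2 ∧ (J p.2 : ℕ) < (I p.1 : ℕ)) with hT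
  -- T has at least k(k-1)/2 elements
  have hTcard : k * (k - 1) / 2 ≤ T.card := by
    set D : Finset (Fin k × Fin k) := (Finset.univ : Finset (Fin k)).offDiag with hD
    set f : Fin k × Fin k → Fin k × Fin k :=
      fun p => if (J p.2 : ℕ) < (I p.1 : ℕ) then p else (p.2, p.1) with hf
    have hmaps : ∀ p ∈ D, f p ∈ T := by
      rintro ⟨r, s⟩ hp
      rw [hD, Finset.mem_offDiag] at hp
      obtain ⟨-, -, hrs⟩ := hp
      by_cases hlt : (J s : ℕ) < (I r : ℕ)
      · simp only [hf, if_pos hlt, hT, Finset.mem_filter]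
        exact ⟨Finset.mem_univ _, hrs, hlt⟩
      · push_neg at hlt
        simp only [hf, if_neg (not_lt.mpr hlt), hT, Finset.mem_filter]
        refine ⟨Finset.mem_univ _, Ne.symm hrs, ?_⟩
        have h1 := hJI r
        have h2 := hJI s
        have h3 := hIJ r s hrs
        omega
    have hfib : ∀ b ∈ T, (D.filter fun p => f p = b).card ≤ 2 := by
      intro b _
      have hsub : (D.filter fun p => f p = b) ⊆ {b, (b.2, b.1)} := by
        intro p hp
        rw [Finset.mem_filter] at hp
        have hfp := hp.2
        by_cases hlt : (J p.2 : ℕ) < (I p.1 : ℕ)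
        · rw [hf] at hfp
          simp only [if_pos hlt] at hfp
          simp [hfp]
        · rw [hf] at hfp
          simp only [if_neg hlt] at hfp
          have : p = (b.2, b.1) := by
            cases p; cases b
            simp only [Prod.mk.injEq] at hfp ⊢
            exact ⟨hfp.2.symm ▸ rfl, hfp.1.symm ▸ rfl⟩
          simp [this]
      calc (D.filter fun p => f p = b).card ≤ ({b, (b.2, b.1)} : Finset _).card :=
            Finset.card_le_card hsub
        _ ≤ 2 := by
            apply le_trans (Finset.card_insert_le _ _)
            simp
    have hDle : D.card ≤ 2 * T.card :=
      Finset.card_le_mul_card_image_of_maps_to hmaps 2 hfib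
    have hDcard : D.card = k * (k - 1) := by
      rw [hD, Finset.offDiag_card]
      simp [Nat.mul_sub, Finset.card_univ]
    rw [hDcard] at hDle
    calc k * (k - 1) / 2 ≤ 2 * T.card / 2 := Nat.div_le_div_right hDle
      _ = T.card := Nat.mul_div_cancel_left _ (by norm_num)
  -- The set of forced positions
  set S : Finset (Fin N × Fin (N + 1)) := T.image (fun p => (I p.1, J p.2)) with hS
  have hinj : Function.Injective (fun p : Fin k × Fin k => (I p.1, J p.2)) := by
    intro p q h
    simp only [Prod.mk.injEq] at h
    exact Prod.ext (hI h.1) (hJ h.2)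
  have hScard : S.card = T.card := Finset.card_image_of_injective _ hinj
  -- every valid g is forced to be true on S
  have hforced : ∀ g, P g → ∀ x ∈ S, g x = true := by
    intro g hg x hx
    rw [hS, Finset.mem_image] at hx
    obtain ⟨p, hp, rfl⟩ := hx
    rw [hT, Finset.mem_filter] at hp
    obtain ⟨-, hps, hlt⟩ := hp
    have := hg.2 p.1 p.2 hps
    rw [Bmat, if_neg (by omega), if_neg (by omega)] at this
    by_contra hgx
    simp only [Bool.not_eq_true] at hgx
    rw [hgx] at this
    simp at this
  -- the injection
  set Φ : {g // P g} × (↥S → Bool) → (Fin N × Fin (N + 1) → Bool) :=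
    fun gh x => if hx : x ∈ S then gh.2 ⟨x, hx⟩ else gh.1.val x with hΦ
  have hΦinj : Function.Injective Φ := by
    rintro ⟨⟨g, hg⟩, h⟩ ⟨⟨g', hg'⟩, h'⟩ heq
    have hval : ∀ x, Φ (⟨⟨g, hg⟩, h⟩) x = Φ (⟨⟨g', hg'⟩, h'⟩) x :=
      fun x => congrFun heq x
    have hh : h = h' := by
      funext ⟨x, hx⟩
      have := hval x
      simpa only [hΦ, dif_pos hx] using this
    have hgg : g = g' := by
      funext x
      by_cases hx : x ∈ S
      · rw [hforced g hg x hx, hforced g' hg' x hx]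
      · have := hval x
        simpa only [hΦ, dif_neg hx] using this
    simp [hh, hgg]
  have hcard := Nat.card_le_card_of_injective Φ hΦinj
  rw [Nat.card_prod] at hcard
  have hfun : Nat.card (↥S → Bool) = 2 ^ S.card := by
    rw [Nat.card_fun]
    simp [Nat.card_eq_fintype_card]
  rw [hfun] at hcard
  calc Nat.card {g // P g} * 2 ^ (k * (k - 1) / 2)
      ≤ Nat.card {g // P g} * 2 ^ S.card := by
        apply Nat.mul_le_mul_left
        exact Nat.pow_le_pow_right (by norm_num) (hScard ▸ hTcard)
    _ ≤ Nat.card (Fin N × Fin (N + 1) → Bool) := hcard
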